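/- arXiv:math/0101182 — 2 statements merged into one kernel-verified Lean document; each statement's English description precedes it below -/
import Mathlib

section
/- Let m, n ≥ 2 be integers. Let V = (v | Θ̄) ∈ M_n be unitary with v ∈ M_{n,1}, Θ ∈ M_{n,n−1}, and let W ∈ M_m be unitary with Wᵗ = (w | Ξ̄), w ∈ M_{m,1}, Ξ ∈ M_{m,m−1}. Let u ∈ ℂ, Υ ∈ M_{m−1,n−1}, and set Φ = W* · [[u, 0],[0, Υ]] · V* ∈ M_{m,n} (the middle matrix having (1,1)-entry u, bottom-right block Υ, and zeros elsewhere). Suppose A ∈ M_{n−1,n} satisfies A Θ = I_{n−1} and B ∈ M_{m−1,m} satisfies B Ξ = I_{m−1}. Then for every g ∈ ℂ^{n−1}, q ∈ ℂ, and f = Aᵗ g + q·v ∈ ℂⁿ, one has Φ f = (u·(v* Aᵗ g) + u·q − wᵗ B* Υ g)·w̄ + B* Υ g, where v* Aᵗ g and wᵗ B* Υ g denote scalars. -/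
open Matrix

lemma mul_one_by_one {p : Type*} (M : Matrix p (Fin 1) ℂ) (s : Matrix (Fin 1) (Fin 1) ℂ) :
    M * s = s 0 0 • M := by
  have hs : s = s 0 0 • (1 : Matrix (Fin 1) (Fin 1) ℂ) := by
    ext i j
    fin_cases i; fin_cases j; simp
  rw [hs]
  simp [Matrix.mul_smul]

lemma hth_aux {p q : Type*} (M : Matrix p q ℂ) : Mᴴᵀᴴ = Mᵀ := by
  ext i j; simp

/-- Let `m, n ≥ 2`, let `V = (v | Θ̄) ∈ M_n` be unitary and `W ∈ M_m` unitary with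
`Wᵗ = (w | Ξ̄)`.  Let `u ∈ ℂ`, `Υ ∈ M_{m-1,n-1}` and
`Φ = W* [[u,0],[0,Υ]] V*`.  Suppose `A Θ = I_{n-1}` and `B Ξ = I_{m-1}`.  Then for every
`g ∈ ℂ^{n-1}`, `q ∈ ℂ`, and `f = Aᵗ g + q v`, one has
`Φ f = (u (v* Aᵗ g) + u q − wᵗ B* Υ g) w̄ + B* Υ g`.
(Column vectors in `ℂ^p` are identified with `p × 1` matrices, `Fin n` with
`Fin 1 ⊕ Fin (n-1)`, and `Fin m` with `Fin 1 ⊕ Fin (m-1)`; the scalars `v* Aᵗ g` and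
`wᵗ B* Υ g` are the unique entries of the corresponding `1 × 1` matrices.) -/
theorem stmt4 (m n : ℕ) (hm : 2 ≤ m) (hn : 2 ≤ n)
    (v : Matrix (Fin 1 ⊕ Fin (n - 1)) (Fin 1) ℂ)
    (Θ : Matrix (Fin 1 ⊕ Fin (n - 1)) (Fin (n - 1)) ℂ)
    (w : Matrix (Fin 1 ⊕ Fin (m - 1)) (Fin 1) ℂ)
    (Ξ : Matrix (Fin 1 ⊕ Fin (m - 1)) (Fin (m - 1)) ℂ)
    (V : Matrix (Fin 1 ⊕ Fin (n - 1)) (Fin 1 ⊕ Fin (n - 1)) ℂ)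
    (W : Matrix (Fin 1 ⊕ Fin (m - 1)) (Fin 1 ⊕ Fin (m - 1)) ℂ)
    (hVu : V ∈ Matrix.unitaryGroup (Fin 1 ⊕ Fin (n - 1)) ℂ)
    (hWu : W ∈ Matrix.unitaryGroup (Fin 1 ⊕ Fin (m - 1)) ℂ)
    (hV : V = fromCols v Θᴴᵀ)
    (hW : Wᵀ = fromCols w Ξᴴᵀ)
    (u : ℂ) (Υ : Matrix (Fin (m - 1)) (Fin (n - 1)) ℂ)
    (Φ : Matrix (Fin 1 ⊕ Fin (m - 1)) (Fin 1 ⊕ Fin (n - 1)) ℂ)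
    (hΦ : Φ = Wᴴ * fromBlocks (u • (1 : Matrix (Fin 1) (Fin 1) ℂ)) 0 0 Υ * Vᴴ)
    (A : Matrix (Fin (n - 1)) (Fin 1 ⊕ Fin (n - 1)) ℂ)
    (B : Matrix (Fin (m - 1)) (Fin 1 ⊕ Fin (m - 1)) ℂ)
    (hA : A * Θ = 1) (hB : B * Ξ = 1) :
    ∀ (g : Matrix (Fin (n - 1)) (Fin 1) ℂ) (q : ℂ)
      (f : Matrix (Fin 1 ⊕ Fin (n - 1)) (Fin 1) ℂ), f = Aᵀ * g + q • v →
      Φ * f = (u * (vᴴ * (Aᵀ * g)) 0 0 + u * q - (wᵀ * (Bᴴ * (Υ * g))) 0 0) • wᴴᵀ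
        + Bᴴ * (Υ * g) := by
  intro g q f hf
  -- Vᴴ as rows
  have hVH : Vᴴ = fromRows vᴴ Θᵀ := by
    rw [hV, conjTranspose_fromCols_eq_fromRows_conjTranspose, hth_aux]
  -- Wᴴ as columns
  have hWH : Wᴴ = fromCols wᴴᵀ Ξ := by
    have h1 : Wᴴ = ((Wᵀ)ᴴ)ᵀ := by ext i j; simp
    rw [h1, hW, conjTranspose_fromCols_eq_fromRows_conjTranspose,
      transpose_fromRows, hth_aux, transpose_transpose]
  -- W as rows (from hW)
  have hWr : W = fromRows wᵀ Ξᴴ := by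
    have h1 : W = (Wᵀ)ᵀ := by simp
    have h2 : (Ξᴴᵀ)ᵀ = Ξᴴ := transpose_transpose _
    rw [h1, hW, transpose_fromCols, h2]
  -- V unitary: Vᴴ * V = 1 gives vᴴ v = 1 and Θᵀ v = 0
  have hVuu : Vᴴ * V = 1 := mem_unitaryGroup_iff'.mp hVu
  have hVb : fromBlocks (vᴴ * v) (vᴴ * Θᴴᵀ) (Θᵀ * v) (Θᵀ * Θᴴᵀ)
      = fromBlocks (1 : Matrix (Fin 1) (Fin 1) ℂ) 0 0 1 := by
    rw [← fromRows_mul_fromCols, ← hVH, ← hV, hVuu, fromBlocks_one]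
  have hvv : vᴴ * v = 1 := (fromBlocks_inj.mp hVb).1
  have hΘv : Θᵀ * v = 0 := (fromBlocks_inj.mp hVb).2.2.1
  -- W unitary: Wᴴ * W = 1 gives wᴴᵀ * wᵀ + Ξ * Ξᴴ = 1
  have hWuu : Wᴴ * W = 1 := mem_unitaryGroup_iff'.mp hWu
  have hWone : wᴴᵀ * wᵀ + Ξ * Ξᴴ = 1 := by
    rw [← fromCols_mul_fromRows wᴴᵀ Ξ wᵀ Ξᴴ, ← hWH, ← hWr, hWuu]
  -- transposed inverses
  have hAT : Θᵀ * Aᵀ = 1 := by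
    rw [← transpose_mul, hA, transpose_one]
  have hBT : Ξᴴ * Bᴴ = 1 := by
    rw [← conjTranspose_mul, hB, conjTranspose_one]
  -- compute Vᴴ * f
  have hv1 : vᴴ * f = vᴴ * (Aᵀ * g) + q • 1 := by
    rw [hf, Matrix.mul_add, Matrix.mul_smul, hvv]
  have hv2 : Θᵀ * f = g := by
    rw [hf, Matrix.mul_add, Matrix.mul_smul, hΘv, ← Matrix.mul_assoc, hAT,
      Matrix.one_mul, smul_zero, add_zero]
  have hVf : Vᴴ * f = fromRows (vᴴ * (Aᵀ * g) + q • 1) g := by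
    rw [hVH, fromRows_mul, hv1, hv2]
  -- key step for Ξ * (Υ * g)
  have hXi : Ξ * (Υ * g) = Bᴴ * (Υ * g) - (wᵀ * (Bᴴ * (Υ * g))) 0 0 • wᴴᵀ := by
    have h1 : (wᴴᵀ * wᵀ + Ξ * Ξᴴ) * (Bᴴ * (Υ * g)) = Bᴴ * (Υ * g) := by
      rw [hWone, Matrix.one_mul]
    rw [Matrix.add_mul, Matrix.mul_assoc, Matrix.mul_assoc, ← Matrix.mul_assoc Ξᴴ,
      hBT, Matrix.one_mul] at h1
    have h2 : wᴴᵀ * (wᵀ * (Bᴴ * (Υ * g))) = (wᵀ * (Bᴴ * (Υ * g))) 0 0 • wᴴᵀ := by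
      rw [← Matrix.mul_assoc, Matrix.mul_assoc wᴴᵀ, mul_one_by_one]
    rw [h2] at h1
    linear_combination (norm := module) h1
  -- main computation
  rw [hΦ, Matrix.mul_assoc, Matrix.mul_assoc, hVf, fromBlocks_mul_fromRows, hWH,
    fromCols_mul_fromRows]
  rw [Matrix.zero_mul, add_zero, Matrix.zero_mul, zero_add]
  rw [Matrix.smul_mul, Matrix.one_mul, Matrix.mul_smul, Matrix.mul_add,
    mul_one_by_one wᴴᵀ (vᴴ * (Aᵀ * g)), Matrix.mul_smul, Matrix.mul_one, hXi]
  module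
end

section
/- For every z ∈ ℂ with |z| = 1, the 2×2 matrices M₁(z) = (1/√2)·[[1, −z⁵],[z̄⁵, 1]] and M₂(z) = (1/√2)·[[z̄, 1],[−1, z]] are unitary, and [[z̄², 0],[0, z̄⁶]] = M₁(z) · [[z̄, 0],[0, z̄⁷]] · M₂(z), where z̄ denotes the complex conjugate of z. -/
open Matrix

/-- For every `z ∈ ℂ` with `|z| = 1`, the matrices
`M₁(z) = (1/√2)·[[1, −z⁵],[z̄⁵, 1]]` and `M₂(z) = (1/√2)·[[z̄, 1],[−1, z]]` are unitary and
`[[z̄², 0],[0, z̄⁶]] = M₁(z) · [[z̄, 0],[0, z̄⁷]] · M₂(z)`. -/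
theorem stmt6 (z : ℂ) (hz : ‖z‖ = 1) :
    ((1 / (Real.sqrt 2 : ℂ)) • !![1, -z ^ 5; (starRingEnd ℂ z) ^ 5, 1]
        ∈ Matrix.unitaryGroup (Fin 2) ℂ) ∧
    ((1 / (Real.sqrt 2 : ℂ)) • !![starRingEnd ℂ z, 1; -1, z]
        ∈ Matrix.unitaryGroup (Fin 2) ℂ) ∧
    !![(starRingEnd ℂ z) ^ 2, 0; 0, (starRingEnd ℂ z) ^ 6] =
      ((1 / (Real.sqrt 2 : ℂ)) • !![1, -z ^ 5; (starRingEnd ℂ z) ^ 5, 1]) *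
        !![starRingEnd ℂ z, 0; 0, (starRingEnd ℂ z) ^ 7] *
        ((1 / (Real.sqrt 2 : ℂ)) • !![starRingEnd ℂ z, 1; -1, z]) := by
  have hz1 : (starRingEnd ℂ z) * z = 1 := by
    rw [mul_comm, Complex.mul_conj]
    norm_cast
    simp [Complex.normSq_eq_norm_sq, hz]
  have h2 : ((Real.sqrt 2 : ℝ) : ℂ) * ((Real.sqrt 2 : ℝ) : ℂ) = 2 := by
    rw [← Complex.ofReal_mul, Real.mul_self_sqrt (by norm_num)]
    norm_num
  have h2' : ((Real.sqrt 2 : ℝ) : ℂ) ≠ 0 := by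
    simp [Real.sqrt_eq_zero']
  refine ⟨?_, ?_, ?_⟩
  · rw [Matrix.mem_unitaryGroup_iff]
    ext i j
    fin_cases i <;> fin_cases j <;>
      simp [Matrix.mul_apply, Fin.sum_univ_two, Matrix.star_apply, Complex.conj_conj] <;>
      field_simp <;>
      ring_nf <;>
      linear_combination (((starRingEnd ℂ z)*z)^4 + ((starRingEnd ℂ z)*z)^3 + ((starRingEnd ℂ z)*z)^2 + (starRingEnd ℂ z)*z + 1) * hz1 - h2
  · rw [Matrix.mem_unitaryGroup_iff]
    ext i j
    fin_cases i <;> fin_cases j <;>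
      simp [Matrix.mul_apply, Fin.sum_univ_two, Matrix.star_apply, Complex.conj_conj] <;>
      field_simp <;>
      ring_nf <;>
      linear_combination hz1 - h2
  · rw [Matrix.smul_mul, Matrix.mul_smul, Matrix.smul_mul, smul_smul,
      Matrix.mul_fin_two, Matrix.mul_fin_two]
    have S5 : ∀ w u : ℂ, w*u - 1 = 0 → w^5*u^5 - 1 = 0 := by
      intro w u h; linear_combination ((w*u)^4+(w*u)^3+(w*u)^2+w*u+1) * h
    have S6 : ∀ w u : ℂ, w*u - 1 = 0 → w^6*u^6 - 1 = 0 := by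
      intro w u h; linear_combination ((w*u)^5+(w*u)^4+(w*u)^3+(w*u)^2+w*u+1) * h
    have hz1' : starRingEnd ℂ z * z - 1 = 0 := by linear_combination hz1
    have h5 := S5 _ _ hz1'
    have h6 := S6 _ _ hz1'
    have hs : (1 / (Real.sqrt 2 : ℂ)) * (1 / (Real.sqrt 2 : ℂ)) = 1 / 2 := by
      rw [div_mul_div_comm, h2]
      norm_num
    rw [hs]
    ext i j
    fin_cases i <;> fin_cases j <;> simp [Matrix.smul_apply, Complex.conj_conj]
    · linear_combination (-1/2 : ℂ) * (starRingEnd ℂ z)^2 * h5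
    · linear_combination -(starRingEnd ℂ z) * h6
    · linear_combination (0 : ℂ) * h5
    · linear_combination (-1/2 : ℂ) * (starRingEnd ℂ z)^6 * hz1'
end
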